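/- Let r ≥ k ≥ 0 be integers. The (r-k+1)×(r-k+1) matrix M whose (p,q)-entry (for 1 ≤ p,q ≤ r-k+1) is the binomial coefficient C(k+p, q) has determinant equal to C(r+1, k); in particular M is invertible. -/

import Mathlib

open Finset Matrix

private lemma prod_shift_fact (k n : ℕ) :
    ∏ i ∈ range n, (k + 1 + i) = n.factorial * (k + n).choose n := by
  induction n with
  | zero => simp
  | succ n ih =>
      rw [prod_range_succ, ih, Nat.factorial_succ]
      have h := Nat.add_one_mul_choose_eq (k + n) n
      calc Nat.factorial n * (k + n).choose n * (k + 1 + n)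
          = Nat.factorial n * ((k + n + 1) * (k + n).choose n) := by ring
        _ = Nat.factorial n * ((k + n + 1).choose (n + 1) * (n + 1)) := by rw [h]
        _ = (n + 1) * Nat.factorial n * (k + (n + 1)).choose (n + 1) := by
              rw [show k + (n + 1) = k + n + 1 from rfl]; ring

private lemma prod_cast_fact (n : ℕ) :
    ∏ i ∈ range n, ((i : ℚ) + 1) = (n.factorial : ℚ) := by
  induction n with
  | zero => simp
  | succ m ih => rw [prod_range_succ, ih, Nat.factorial_succ]; push_cast; ring

private lemma key_det (k n : ℕ) :
    (Matrix.of fun p q : Fin n =>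
        ((Nat.choose (k + 1 + (p : ℕ)) ((q : ℕ) + 1) : ℚ))).det
      = (Nat.choose (k + n) n : ℚ) := by
  set L : Matrix (Fin n) (Fin n) ℚ :=
    Matrix.of fun p j : Fin n => ((Nat.choose (p : ℕ) (j : ℕ) : ℚ)) with hL
  set U : Matrix (Fin n) (Fin n) ℚ :=
    Matrix.of fun j q : Fin n =>
      if (j : ℕ) ≤ (q : ℕ) then ((Nat.choose k ((q : ℕ) - (j : ℕ)) : ℚ)) else 0 with hU
  set d₁ : Fin n → ℚ := fun p => ((k + 1 + (p : ℕ) : ℕ) : ℚ) with hd₁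
  set d₂ : Fin n → ℚ := fun q => (((q : ℕ) + 1 : ℚ))⁻¹ with hd₂
  have hLU : ∀ p q : Fin n, (L * U) p q = ((Nat.choose (k + (p : ℕ)) (q : ℕ) : ℚ)) := by
    intro p q
    have hnat : (k + (p : ℕ)).choose (q : ℕ)
        = ∑ j ∈ range ((q : ℕ) + 1), (p : ℕ).choose j * k.choose ((q : ℕ) - j) := by
      rw [Nat.add_comm k (p : ℕ), Nat.add_choose_eq,
        Finset.Nat.sum_antidiagonal_eq_sum_range_succ_mk]
    set f : ℕ → ℚ := fun j =>
      if j ≤ (q : ℕ) then (((p : ℕ).choose j * k.choose ((q : ℕ) - j) : ℕ) : ℚ) else 0 with hf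
    have hterm : ∀ j : Fin n, L p j * U j q = f ((j : ℕ)) := by
      intro j
      simp only [hL, hU, hf, Matrix.of_apply]
      split_ifs with h
      · push_cast; ring
      · simp
    have hsub : range ((q : ℕ) + 1) ⊆ range n := range_subset_range.mpr q.2
    rw [Matrix.mul_apply]
    calc ∑ j : Fin n, L p j * U j q = ∑ j : Fin n, f ((j : ℕ)) :=
          Finset.sum_congr rfl fun j _ => hterm j
      _ = ∑ j ∈ range n, f j := Fin.sum_univ_eq_sum_range f n
      _ = ∑ j ∈ range ((q : ℕ) + 1), f j := by
          refine (Finset.sum_subset hsub ?_).symm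
          intro j _ hj
          simp only [mem_range, not_lt] at hj
          simp [hf, Nat.not_le.mpr (Nat.lt_of_succ_le hj)]
      _ = ((Nat.choose (k + (p : ℕ)) (q : ℕ) : ℚ)) := by
          rw [hnat]
          push_cast
          refine Finset.sum_congr rfl fun j hj => ?_
          simp only [mem_range] at hj
          have hj' : j ≤ (q : ℕ) := Nat.lt_succ_iff.mp hj
          simp only [hf, if_pos hj']
          push_cast
          ring
  have hM : (Matrix.of fun p q : Fin n =>
        ((Nat.choose (k + 1 + (p : ℕ)) ((q : ℕ) + 1) : ℚ)))
      = Matrix.diagonal d₁ * (L * U) * Matrix.diagonal d₂ := by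
    ext p q
    rw [Matrix.mul_diagonal, Matrix.diagonal_mul, hLU p q]
    have hq : ((q : ℕ) : ℚ) + 1 ≠ 0 := by positivity
    have hnat := Nat.add_one_mul_choose_eq (k + (p : ℕ)) (q : ℕ)
    have hcast : ((k : ℚ) + (p : ℕ) + 1) * ((k + (p : ℕ)).choose (q : ℕ) : ℚ)
        = ((k + (p : ℕ) + 1).choose ((q : ℕ) + 1) : ℚ) * ((q : ℕ) + 1) := by
      exact_mod_cast congrArg (fun x : ℕ => (x : ℚ)) hnat
    have hrw : k + 1 + (p : ℕ) = k + (p : ℕ) + 1 := by omega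
    simp only [Matrix.of_apply, hd₁, hd₂, hrw]
    push_cast
    field_simp
    linear_combination -hcast
  have hdetL : L.det = 1 := by
    have ht : L.BlockTriangular OrderDual.toDual := by
      intro i j hij
      simp only [hL, Matrix.of_apply]
      exact_mod_cast Nat.choose_eq_zero_of_lt hij
    rw [Matrix.det_of_lowerTriangular L ht]
    simp [hL]
  have hdetU : U.det = 1 := by
    have ht : U.BlockTriangular id := by
      intro i j hij
      simp only [hU, Matrix.of_apply]
      rw [if_neg]
      exact Nat.not_le.mpr hij
    rw [Matrix.det_of_upperTriangular ht]
    simp [hU]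
  have h1 : ∏ p : Fin n, d₁ p = ((n.factorial * (k + n).choose n : ℕ) : ℚ) := by
    calc ∏ p : Fin n, d₁ p = ∏ i ∈ range n, (((k + 1 + i : ℕ)) : ℚ) :=
          Fin.prod_univ_eq_prod_range (fun i => (((k + 1 + i : ℕ)) : ℚ)) n
      _ = (((∏ i ∈ range n, (k + 1 + i) : ℕ)) : ℚ) := (Nat.cast_prod _ _).symm
      _ = _ := by rw [prod_shift_fact]
  have h2 : ∏ q : Fin n, d₂ q = ((n.factorial : ℚ))⁻¹ := by
    rw [hd₂]
    calc ∏ q : Fin n, (((q : ℕ) : ℚ) + 1)⁻¹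
        = (∏ q : Fin n, (((q : ℕ) : ℚ) + 1))⁻¹ := by rw [Finset.prod_inv_distrib]
      _ = (∏ i ∈ range n, ((i : ℚ) + 1))⁻¹ := by
          rw [Fin.prod_univ_eq_prod_range (fun i => ((i : ℚ) + 1)) n]
      _ = ((n.factorial : ℚ))⁻¹ := by rw [prod_cast_fact]
  rw [hM, Matrix.det_mul, Matrix.det_mul, Matrix.det_diagonal, Matrix.det_diagonal,
    Matrix.det_mul, hdetL, hdetU, h1, h2]
  have hfact : (n.factorial : ℚ) ≠ 0 := by exact_mod_cast n.factorial_ne_zero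
  push_cast
  field_simp

theorem stmt_1 (r k : ℕ) (hkr : k ≤ r) :
    (Matrix.of fun p q : Fin (r - k + 1) =>
        ((Nat.choose (k + 1 + (p : ℕ)) ((q : ℕ) + 1) : ℚ))).det
      = (Nat.choose (r + 1) k : ℚ) ∧
    IsUnit (Matrix.of fun p q : Fin (r - k + 1) =>
        ((Nat.choose (k + 1 + (p : ℕ)) ((q : ℕ) + 1) : ℚ))) := by
  have hkn : k + (r - k + 1) = r + 1 := by omega
  have hd := key_det k (r - k + 1)
  rw [hkn] at hd
  have hsymm : (r + 1).choose (r - k + 1) = (r + 1).choose k := by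
    have h : r - k + 1 = (r + 1) - k := by omega
    rw [h, Nat.choose_symm (by omega)]
  rw [hsymm] at hd
  refine ⟨hd, ?_⟩
  rw [Matrix.isUnit_iff_isUnit_det, hd, isUnit_iff_ne_zero]
  exact_mod_cast (Nat.choose_pos (by omega : k ≤ r + 1)).ne'
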